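/- Let M be a right proper model category equipped with a functor Q : M → M and a natural transformation η : Id → Q satisfying: (A1) Q preserves weak equivalences; (A2) the maps η_{Q(A)}, Q(η_A) : Q(A) → QQ(A) are weak equivalences for all A; (A3) for every Q-fibration p : B → Q(A) the induced map A ×_{Q(A)} B → B is a Q-weak equivalence. Then M admits a right proper model structure whose weak equivalences are the Q-weak equivalences (maps f with Q(f) a weak equivalence), whose cofibrations are those of M, and whose fibrations are the Q-fibrations (maps with the right lifting property against cofibrations that are Q-weak equivalences). -/

import Mathlib

open CategoryTheory CategoryTheory.Limits

universe v u

/-- `f` is a retract of `f'` in the arrow category. -/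
def IsRetractOfMap {C : Type u} [Category.{v} C] {X Y X' Y' : C}
    (f : X ⟶ Y) (f' : X' ⟶ Y') : Prop :=
  ∃ (iX : X ⟶ X') (rX : X' ⟶ X) (iY : Y ⟶ Y') (rY : Y' ⟶ Y),
    iX ≫ rX = 𝟙 X ∧ iY ≫ rY = 𝟙 Y ∧ iX ≫ f' = f ≫ iY ∧ f' ≫ rY = rX ≫ f

/-- A (Quillen) model structure on a category `C`: three classes of morphisms
(weak equivalences, fibrations, cofibrations) satisfying the usual axioms
(two-out-of-three, retract stability, lifting, factorization). -/
structure ModelStructure (C : Type u) [Category.{v} C] where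
  W : MorphismProperty C
  Fib : MorphismProperty C
  Cof : MorphismProperty C
  w_id : ∀ X : C, W (𝟙 X)
  fib_id : ∀ X : C, Fib (𝟙 X)
  cof_id : ∀ X : C, Cof (𝟙 X)
  w_comp : ∀ {X Y Z : C} (f : X ⟶ Y) (g : Y ⟶ Z), W f → W g → W (f ≫ g)
  fib_comp : ∀ {X Y Z : C} (f : X ⟶ Y) (g : Y ⟶ Z), Fib f → Fib g → Fib (f ≫ g)
  cof_comp : ∀ {X Y Z : C} (f : X ⟶ Y) (g : Y ⟶ Z), Cof f → Cof g → Cof (f ≫ g)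
  w_of_postcomp : ∀ {X Y Z : C} (f : X ⟶ Y) (g : Y ⟶ Z), W g → W (f ≫ g) → W f
  w_of_precomp : ∀ {X Y Z : C} (f : X ⟶ Y) (g : Y ⟶ Z), W f → W (f ≫ g) → W g
  w_retract : ∀ {X Y X' Y' : C} (f : X ⟶ Y) (f' : X' ⟶ Y'),
    IsRetractOfMap f f' → W f' → W f
  fib_retract : ∀ {X Y X' Y' : C} (f : X ⟶ Y) (f' : X' ⟶ Y'),
    IsRetractOfMap f f' → Fib f' → Fib f
  cof_retract : ∀ {X Y X' Y' : C} (f : X ⟶ Y) (f' : X' ⟶ Y'),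
    IsRetractOfMap f f' → Cof f' → Cof f
  lift : ∀ {A B X Y : C} {i : A ⟶ B} {p : X ⟶ Y}, Cof i → Fib p → (W i ∨ W p) →
    ∀ {f : A ⟶ X} {g : B ⟶ Y}, f ≫ p = i ≫ g →
      ∃ h : B ⟶ X, i ≫ h = f ∧ h ≫ p = g
  factor_cof_trivFib : ∀ {X Y : C} (f : X ⟶ Y),
    ∃ (Z : C) (i : X ⟶ Z) (p : Z ⟶ Y), Cof i ∧ Fib p ∧ W p ∧ i ≫ p = f
  factor_trivCof_fib : ∀ {X Y : C} (f : X ⟶ Y),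
    ∃ (Z : C) (i : X ⟶ Z) (p : Z ⟶ Y), Cof i ∧ W i ∧ Fib p ∧ i ≫ p = f

variable {C : Type u} [Category.{v} C]

/-- An object is fibrant if the map to the terminal object is a fibration. -/
def ModelStructure.Fibrant [HasTerminal C] (M : ModelStructure C) (X : C) : Prop :=
  M.Fib (terminal.from X)

/-- An object is cofibrant if the map from the initial object is a cofibration. -/
def ModelStructure.Cofibrant [HasInitial C] (M : ModelStructure C) (X : C) : Prop :=
  M.Cof (initial.to X)

/-- A Quillen adjunction: the left adjoint preserves cofibrations and trivial
cofibrations. -/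
def IsQuillenAdjunction {D : Type u} [Category.{v} D]
    (MC : ModelStructure C) (MD : ModelStructure D)
    (F : D ⥤ C) (U : C ⥤ D) (_adj : F ⊣ U) : Prop :=
  (∀ {X Y : D} (f : X ⟶ Y), MD.Cof f → MC.Cof (F.map f)) ∧
  (∀ {X Y : D} (f : X ⟶ Y), MD.Cof f → MD.W f → MC.Cof (F.map f) ∧ MC.W (F.map f))

section BousfieldFriedlander

variable [HasPullbacks C]

/-- A model structure is right proper if the pullback of a weak equivalence along a
fibration is a weak equivalence. -/
def ModelStructure.RightProper (M : ModelStructure C) : Prop :=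
  ∀ {X Y Z : C} (f : X ⟶ Z) (p : Y ⟶ Z), M.W f → M.Fib p →
    M.W (pullback.snd f p)

variable (M : ModelStructure C) (Q : C ⥤ C) (η : 𝟭 C ⟶ Q)

/-- `Q`-weak equivalences: maps sent to weak equivalences by `Q`. -/
def QWeakEquivalence : MorphismProperty C := fun _ _ f => M.W (Q.map f)

/-- `Q`-fibrations: maps with the right lifting property against all cofibrations which
are `Q`-weak equivalences. -/
def QFibration : MorphismProperty C := fun X Y p =>
  ∀ {A B : C} (i : A ⟶ B), M.Cof i → QWeakEquivalence M Q i →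
    ∀ (f : A ⟶ X) (g : B ⟶ Y), f ≫ p = i ≫ g →
      ∃ h : B ⟶ X, i ≫ h = f ∧ h ≫ p = g

end BousfieldFriedlander

namespace BF

section Aux

variable {C : Type u} [Category.{v} C]

/-- Right lifting property against a class of maps. -/
def HasRLP (L : MorphismProperty C) {X Y : C} (p : X ⟶ Y) : Prop :=
  ∀ {A B : C} (i : A ⟶ B), L i → ∀ (f : A ⟶ X) (g : B ⟶ Y), f ≫ p = i ≫ g →
    ∃ h : B ⟶ X, i ≫ h = f ∧ h ≫ p = g

variable (M : ModelStructure C)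

lemma w_of_iso {X Y : C} (e : X ⟶ Y) [IsIso e] : M.W e := by
  refine M.w_retract e (𝟙 X) ⟨𝟙 X, 𝟙 X, inv e, e, by simp, by simp, by simp, by simp⟩ (M.w_id X)

lemma trivFib_rlp {X Y : C} {p : X ⟶ Y} (hf : M.Fib p) (hw : M.W p) : HasRLP M.Cof p :=
  fun i hi _ _ sq => M.lift hi hf (Or.inr hw) sq

lemma fib_rlp {X Y : C} {p : X ⟶ Y} (hf : M.Fib p) :
    HasRLP (fun _ _ i => M.Cof i ∧ M.W i) p :=
  fun _ hi _ _ sq => M.lift hi.1 hf (Or.inl hi.2) sq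

lemma trivFib_of_rlp {X Y : C} {p : X ⟶ Y} (h : HasRLP M.Cof p) : M.Fib p ∧ M.W p := by
  obtain ⟨Z, i, q, hic, hqf, hqw, hiq⟩ := M.factor_cof_trivFib p
  obtain ⟨r, hr1, hr2⟩ := h i hic (𝟙 X) q (by rw [Category.id_comp, hiq])
  have hret : IsRetractOfMap p q :=
    ⟨i, r, 𝟙 Y, 𝟙 Y, hr1, Category.id_comp _, by rw [hiq, Category.comp_id],
      by rw [Category.comp_id, hr2]⟩
  exact ⟨M.fib_retract _ _ hret hqf, M.w_retract _ _ hret hqw⟩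

lemma fib_of_rlp {X Y : C} {p : X ⟶ Y}
    (h : HasRLP (fun _ _ i => M.Cof i ∧ M.W i) p) : M.Fib p := by
  obtain ⟨Z, i, q, hic, hiw, hqf, hiq⟩ := M.factor_trivCof_fib p
  obtain ⟨r, hr1, hr2⟩ := h i ⟨hic, hiw⟩ (𝟙 X) q (by rw [Category.id_comp, hiq])
  exact M.fib_retract p q
    ⟨i, r, 𝟙 Y, 𝟙 Y, hr1, Category.id_comp _, by rw [hiq, Category.comp_id],
      by rw [Category.comp_id, hr2]⟩ hqf

lemma hasRLP_pb_fst [HasPullbacks C] {L : MorphismProperty C} {X B E : C}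
    (f : X ⟶ B) (p : E ⟶ B) (h : HasRLP L p) : HasRLP L (pullback.fst f p) := by
  intro A A' i hi a b sq
  obtain ⟨l, hl1, hl2⟩ := h i hi (a ≫ pullback.snd f p) (b ≫ f)
    (by rw [Category.assoc, ← pullback.condition, ← Category.assoc, sq, Category.assoc])
  refine ⟨pullback.lift b l hl2.symm, ?_, by simp [pullback.lift_fst, pullback.lift_snd, pullback.lift_fst_assoc, pullback.lift_snd_assoc]⟩
  apply pullback.hom_ext
  · simp [pullback.lift_fst, pullback.lift_snd, pullback.lift_fst_assoc, pullback.lift_snd_assoc, ← sq]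
  · simpa [pullback.lift_fst, pullback.lift_snd, pullback.lift_fst_assoc, pullback.lift_snd_assoc] using hl1

lemma hasRLP_pb_snd [HasPullbacks C] {L : MorphismProperty C} {X B E : C}
    (f : X ⟶ B) (p : E ⟶ B) (h : HasRLP L f) : HasRLP L (pullback.snd f p) := by
  intro A A' i hi a b sq
  obtain ⟨l, hl1, hl2⟩ := h i hi (a ≫ pullback.fst f p) (b ≫ p)
    (by rw [Category.assoc, pullback.condition, ← Category.assoc, sq, Category.assoc])
  refine ⟨pullback.lift l b hl2, ?_, by simp [pullback.lift_fst, pullback.lift_snd, pullback.lift_fst_assoc, pullback.lift_snd_assoc]⟩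
  apply pullback.hom_ext
  · simpa [pullback.lift_fst, pullback.lift_snd, pullback.lift_fst_assoc, pullback.lift_snd_assoc] using hl1
  · simp [pullback.lift_fst, pullback.lift_snd, pullback.lift_fst_assoc, pullback.lift_snd_assoc, ← sq]

variable (Q : C ⥤ C) (η : 𝟭 C ⟶ Q)

lemma nat_eta {X Y : C} (f : X ⟶ Y) : f ≫ η.app Y = η.app X ≫ Q.map f := by
  simpa using η.naturality f

lemma qw_comp {X Y Z : C} {f : X ⟶ Y} {g : Y ⟶ Z} (hf : QWeakEquivalence M Q f)
    (hg : QWeakEquivalence M Q g) : QWeakEquivalence M Q (f ≫ g) := by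
  show M.W (Q.map (f ≫ g)); rw [Q.map_comp]; exact M.w_comp _ _ hf hg

lemma qw_of_postcomp {X Y Z : C} (f : X ⟶ Y) (g : Y ⟶ Z) (hg : QWeakEquivalence M Q g)
    (hfg : QWeakEquivalence M Q (f ≫ g)) : QWeakEquivalence M Q f :=
  M.w_of_postcomp (Q.map f) (Q.map g) hg (by rw [← Q.map_comp]; exact hfg)

lemma qw_of_precomp {X Y Z : C} (f : X ⟶ Y) (g : Y ⟶ Z) (hf : QWeakEquivalence M Q f)
    (hfg : QWeakEquivalence M Q (f ≫ g)) : QWeakEquivalence M Q g :=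
  M.w_of_precomp (Q.map f) (Q.map g) hf (by rw [← Q.map_comp]; exact hfg)

lemma qfib_iff_rlp {X Y : C} (p : X ⟶ Y) :
    QFibration M Q p ↔ HasRLP (fun _ _ i => M.Cof i ∧ QWeakEquivalence M Q i) p := by
  constructor
  · intro h A B i hi f g sq; exact h i hi.1 hi.2 f g sq
  · intro h A B i hi1 hi2 f g sq; exact h i ⟨hi1, hi2⟩ f g sq

lemma trivFib_qfib {X Y : C} {p : X ⟶ Y} (hf : M.Fib p) (hw : M.W p) :
    QFibration M Q p :=
  fun i hic _ f g sq => trivFib_rlp M hf hw i hic f g sq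

lemma qfib_fib (A1 : ∀ {X Y : C} (f : X ⟶ Y), M.W f → M.W (Q.map f))
    {X Y : C} {p : X ⟶ Y} (hp : QFibration M Q p) : M.Fib p :=
  fib_of_rlp M (fun i hi f g sq => hp i hi.1 (A1 i hi.2) f g sq)

lemma qfib_id (X : C) : QFibration M Q (𝟙 X) := by
  intro A B i _ _ f g sq
  exact ⟨g, by rw [← sq, Category.comp_id], Category.comp_id g⟩

lemma qfib_comp {X Y Z : C} {p : X ⟶ Y} {q : Y ⟶ Z} (hp : QFibration M Q p)
    (hq : QFibration M Q q) : QFibration M Q (p ≫ q) := by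
  intro A B i hic hiq f g sq
  obtain ⟨h2, h21, h22⟩ := hq i hic hiq (f ≫ p) g (by rw [Category.assoc]; exact sq)
  obtain ⟨h1, h11, h12⟩ := hp i hic hiq f h2 h21.symm
  exact ⟨h1, h11, by rw [← Category.assoc, h12, h22]⟩

lemma qfib_retract {X Y X' Y' : C} {p : X ⟶ Y} {p' : X' ⟶ Y'}
    (hret : IsRetractOfMap p p') (hp : QFibration M Q p') : QFibration M Q p := by
  obtain ⟨iX, rX, iY, rY, h1, h2, h3, h4⟩ := hret
  intro A B i hic hiq f g sq
  obtain ⟨h', hh1, hh2⟩ := hp i hic hiq (f ≫ iX) (g ≫ iY)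
    (by rw [Category.assoc, h3, ← Category.assoc, sq, Category.assoc])
  refine ⟨h' ≫ rX, by rw [← Category.assoc, hh1, Category.assoc, h1, Category.comp_id], ?_⟩
  rw [Category.assoc, ← h4, ← Category.assoc, hh2, Category.assoc, h2, Category.comp_id]

lemma qfib_pb_fst [HasPullbacks C] {X B E : C} (f : X ⟶ B) {p : E ⟶ B}
    (hp : QFibration M Q p) : QFibration M Q (pullback.fst f p) :=
  ((qfib_iff_rlp M Q _).2 (hasRLP_pb_fst f p ((qfib_iff_rlp M Q p).1 hp)))

lemma qfib_pb_snd [HasPullbacks C] {X B E : C} {f : X ⟶ B} (p : E ⟶ B)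
    (hp : QFibration M Q f) : QFibration M Q (pullback.snd f p) :=
  ((qfib_iff_rlp M Q _).2 (hasRLP_pb_snd f p ((qfib_iff_rlp M Q f).1 hp)))

lemma fib_pb_fst [HasPullbacks C] {X B E : C} (f : X ⟶ B) {p : E ⟶ B}
    (hp : M.Fib p) : M.Fib (pullback.fst f p) :=
  fib_of_rlp M (hasRLP_pb_fst f p (fib_rlp M hp))

lemma fib_pb_snd [HasPullbacks C] {X B E : C} {f : X ⟶ B} (p : E ⟶ B)
    (hp : M.Fib f) : M.Fib (pullback.snd f p) :=
  fib_of_rlp M (hasRLP_pb_snd f p (fib_rlp M hp))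

section Star

variable [HasPullbacks C]

/-- The base-change along `f` of a map `a` of objects over `B`. -/
noncomputable def starMap {B X T T' : C} (f : X ⟶ B) {τ : T ⟶ B} {τ' : T' ⟶ B} (a : T ⟶ T')
    (h : a ≫ τ' = τ) : pullback f τ ⟶ pullback f τ' :=
  pullback.lift (pullback.fst f τ) (pullback.snd f τ ≫ a)
    (by rw [Category.assoc, h]; exact pullback.condition)

@[simp] lemma starMap_fst {B X T T' : C} (f : X ⟶ B) {τ : T ⟶ B} {τ' : T' ⟶ B}
    (a : T ⟶ T') (h : a ≫ τ' = τ) :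
    starMap f a h ≫ pullback.fst f τ' = pullback.fst f τ := by
  simp [starMap, pullback.lift_fst, pullback.lift_snd, pullback.lift_fst_assoc, pullback.lift_snd_assoc]

@[simp] lemma starMap_snd {B X T T' : C} (f : X ⟶ B) {τ : T ⟶ B} {τ' : T' ⟶ B}
    (a : T ⟶ T') (h : a ≫ τ' = τ) :
    starMap f a h ≫ pullback.snd f τ' = pullback.snd f τ ≫ a := by
  simp [starMap, pullback.lift_fst, pullback.lift_snd, pullback.lift_fst_assoc, pullback.lift_snd_assoc]

@[simp] lemma starMap_fst_assoc {B X T T' W0 : C} (f : X ⟶ B) {τ : T ⟶ B} {τ' : T' ⟶ B}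
    (a : T ⟶ T') (h : a ≫ τ' = τ) (w : X ⟶ W0) :
    starMap f a h ≫ pullback.fst f τ' ≫ w = pullback.fst f τ ≫ w := by
  rw [← Category.assoc, starMap_fst]

@[simp] lemma starMap_snd_assoc {B X T T' W0 : C} (f : X ⟶ B) {τ : T ⟶ B} {τ' : T' ⟶ B}
    (a : T ⟶ T') (h : a ≫ τ' = τ) (w : T' ⟶ W0) :
    starMap f a h ≫ pullback.snd f τ' ≫ w = pullback.snd f τ ≫ a ≫ w := by
  rw [← Category.assoc, starMap_snd, Category.assoc]

lemma starMap_rlp {B X T T' : C} (f : X ⟶ B) {τ : T ⟶ B} {τ' : T' ⟶ B} (a : T ⟶ T')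
    (h : a ≫ τ' = τ) (ha : HasRLP M.Cof a) : HasRLP M.Cof (starMap f a h) := by
  intro A A' i hi u v sq
  obtain ⟨l, hl1, hl2⟩ := ha i hi (u ≫ pullback.snd f τ) (v ≫ pullback.snd f τ')
    (by rw [Category.assoc, ← starMap_snd f a h, ← Category.assoc, sq, Category.assoc])
  refine ⟨pullback.lift (v ≫ pullback.fst f τ') l
    (by rw [← h, ← Category.assoc l a τ', hl2, Category.assoc, Category.assoc,
        pullback.condition]), ?_, ?_⟩
  · apply pullback.hom_ext
    · rw [Category.assoc]
      simp only [pullback.lift_fst]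
      rw [← Category.assoc, ← sq, Category.assoc, starMap_fst]
    · simpa [pullback.lift_fst, pullback.lift_snd, pullback.lift_fst_assoc, pullback.lift_snd_assoc] using hl1
  · apply pullback.hom_ext
    · simp [pullback.lift_fst, pullback.lift_snd, pullback.lift_fst_assoc, pullback.lift_snd_assoc]
    · simpa [pullback.lift_fst, pullback.lift_snd, pullback.lift_fst_assoc, pullback.lift_snd_assoc] using hl2

end Star

section Main

variable [HasPullbacks C]

lemma lemmaD (hproper : M.RightProper)
    {Z W' : C} {q : Z ⟶ W'} (hq : M.Fib q)
    (hZ : M.W (η.app Z)) (hW : M.W (η.app W')) : QFibration M Q q := by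
  obtain ⟨Zt, jt, qt, hjc, hjw, hqt, hjq⟩ := M.factor_trivCof_fib (Q.map q)
  have hcone : q ≫ η.app W' = (η.app Z ≫ jt) ≫ qt := by
    rw [Category.assoc, hjq, nat_eta Q η q]
  set ψ : Z ⟶ pullback (η.app W') qt := pullback.lift q (η.app Z ≫ jt) hcone with hψdef
  have hψfst : ψ ≫ pullback.fst (η.app W') qt = q := by
    rw [hψdef]; exact pullback.lift_fst _ _ _
  have hψsnd : ψ ≫ pullback.snd (η.app W') qt = η.app Z ≫ jt := by
    rw [hψdef]; exact pullback.lift_snd _ _ _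
  have hsnd_we : M.W (pullback.snd (η.app W') qt) := hproper _ _ hW hqt
  have hψwe : M.W ψ := M.w_of_postcomp ψ _ hsnd_we
    (by rw [hψsnd]; exact M.w_comp _ _ hZ hjw)
  intro A B i hic hiq f g sq
  obtain ⟨D, k, s, hkc, hsf, hsw, hks⟩ := M.factor_cof_trivFib (Q.map i)
  have hkw : M.W k := M.w_of_postcomp k s hsw (by rw [hks]; exact hiq)
  obtain ⟨l, hl1, hl2⟩ := M.lift hkc hqt (Or.inl hkw)
    (f := Q.map f ≫ jt) (g := s ≫ Q.map g)
    (by rw [Category.assoc, hjq, ← Q.map_comp, sq, Q.map_comp, ← Category.assoc, hks])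
  obtain ⟨m, hm1, hm2⟩ := M.lift hic hsf (Or.inr hsw)
    (f := η.app A ≫ k) (g := η.app B)
    (by rw [Category.assoc, hks, ← nat_eta Q η i])
  set φ : B ⟶ pullback (η.app W') qt := pullback.lift g (m ≫ l)
    (by rw [Category.assoc, hl2, ← Category.assoc, hm2, nat_eta Q η g]) with hφdef
  have hφfst : φ ≫ pullback.fst (η.app W') qt = g := by
    rw [hφdef]; exact pullback.lift_fst _ _ _
  have hφsnd : φ ≫ pullback.snd (η.app W') qt = m ≫ l := by
    rw [hφdef]; exact pullback.lift_snd _ _ _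
  have hcomm : i ≫ φ = f ≫ ψ := by
    apply pullback.hom_ext
    · rw [Category.assoc, Category.assoc, hφfst, hψfst, sq]
    · rw [Category.assoc, Category.assoc, hφsnd, hψsnd, ← Category.assoc, hm1,
        Category.assoc, hl1, ← Category.assoc, ← nat_eta Q η f, Category.assoc]
  obtain ⟨V, c, v, hcc, hcw, hvf, hcv⟩ := M.factor_trivCof_fib ψ
  have hvw : M.W v := M.w_of_precomp c v hcw (by rw [hcv]; exact hψwe)
  obtain ⟨lam, hlam1, hlam2⟩ := M.lift hic hvf (Or.inr hvw) (f := f ≫ c) (g := φ)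
    (by rw [Category.assoc, hcv, hcomm])
  obtain ⟨ρ, hρ1, hρ2⟩ := M.lift hcc hq (Or.inl hcw) (f := 𝟙 Z)
    (g := v ≫ pullback.fst (η.app W') qt)
    (by rw [Category.id_comp, ← Category.assoc, hcv, hψfst])
  refine ⟨lam ≫ ρ, ?_, ?_⟩
  · rw [← Category.assoc, hlam1, Category.assoc, hρ1, Category.comp_id]
  · rw [Category.assoc, hρ2, ← Category.assoc, hlam2, hφfst]

lemma eta_we_of_factor (A1 : ∀ {X Y : C} (f : X ⟶ Y), M.W f → M.W (Q.map f))
    (A2 : ∀ A : C, M.W (η.app (Q.obj A)) ∧ M.W (Q.map (η.app A)))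
    {X Z' : C} {j : Q.obj X ⟶ Z'} (hjw : M.W j) : M.W (η.app Z') :=
  M.w_of_precomp j (η.app Z') hjw
    (by rw [nat_eta Q η j]; exact M.w_comp _ _ (A2 X).1 (A1 j hjw))

lemma bf_factor (hproper : M.RightProper)
    (A1 : ∀ {X Y : C} (f : X ⟶ Y), M.W f → M.W (Q.map f))
    (A2 : ∀ A : C, M.W (η.app (Q.obj A)) ∧ M.W (Q.map (η.app A)))
    (A3 : ∀ {A B : C} (p : B ⟶ Q.obj A), QFibration M Q p →
      QWeakEquivalence M Q (pullback.snd (η.app A) p))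
    {X Y : C} (f : X ⟶ Y) :
    ∃ (Z : C) (i : X ⟶ Z) (p : Z ⟶ Y),
      M.Cof i ∧ QWeakEquivalence M Q i ∧ QFibration M Q p ∧ i ≫ p = f := by
  obtain ⟨Z', j, q, hjc, hjw, hqf, hjq⟩ := M.factor_trivCof_fib (Q.map f)
  have hηZ : M.W (η.app Z') := eta_we_of_factor M Q η A1 A2 hjw
  have hqQ : QFibration M Q q := lemmaD M Q η hproper hqf hηZ (A2 Y).1
  have hcone : f ≫ η.app Y = (η.app X ≫ j) ≫ q := by
    rw [Category.assoc, hjq, nat_eta Q η f]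
  set θ : X ⟶ pullback (η.app Y) q := pullback.lift f (η.app X ≫ j) hcone with hθdef
  have hθfst : θ ≫ pullback.fst (η.app Y) q = f := by
    rw [hθdef]; exact pullback.lift_fst _ _ _
  have hθsnd : θ ≫ pullback.snd (η.app Y) q = η.app X ≫ j := by
    rw [hθdef]; exact pullback.lift_snd _ _ _
  have hθqw : QWeakEquivalence M Q θ := qw_of_postcomp M Q θ _ (A3 q hqQ)
    (by rw [hθsnd]; show M.W (Q.map (η.app X ≫ j)); rw [Q.map_comp]
        exact M.w_comp _ _ (A2 X).2 (A1 j hjw))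
  obtain ⟨V, i, r, hic, hrf, hrw, hir⟩ := M.factor_cof_trivFib θ
  have hiqw : QWeakEquivalence M Q i := qw_of_postcomp M Q i r (A1 r hrw)
    (by rw [hir]; exact hθqw)
  refine ⟨V, i, r ≫ pullback.fst (η.app Y) q, hic, hiqw, ?_, ?_⟩
  · exact qfib_comp M Q (trivFib_qfib M Q hrf hrw) (qfib_pb_fst M Q _ hqQ)
  · rw [← Category.assoc, hir, hθfst]

lemma qfib_qw_we
    (A1 : ∀ {X Y : C} (f : X ⟶ Y), M.W f → M.W (Q.map f))
    (A2 : ∀ A : C, M.W (η.app (Q.obj A)) ∧ M.W (Q.map (η.app A)))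
    (A3 : ∀ {A B : C} (p : B ⟶ Q.obj A), QFibration M Q p →
      QWeakEquivalence M Q (pullback.snd (η.app A) p))
    {X Y : C} {p : X ⟶ Y}
    (hp : QFibration M Q p) (hw : QWeakEquivalence M Q p) : M.W p := by
  obtain ⟨Z', j, q, hjc, hjw, hqf, hjq⟩ := M.factor_trivCof_fib (Q.map p)
  have hqw : M.W q := M.w_of_precomp j q hjw (by rw [hjq]; exact hw)
  have hcone : p ≫ η.app Y = (η.app X ≫ j) ≫ q := by
    rw [Category.assoc, hjq, nat_eta Q η p]
  set θ : X ⟶ pullback (η.app Y) q := pullback.lift p (η.app X ≫ j) hcone with hθdef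
  have hθfst : θ ≫ pullback.fst (η.app Y) q = p := by
    rw [hθdef]; exact pullback.lift_fst _ _ _
  have hθsnd : θ ≫ pullback.snd (η.app Y) q = η.app X ≫ j := by
    rw [hθdef]; exact pullback.lift_snd _ _ _
  have hfst := trivFib_of_rlp M (hasRLP_pb_fst (η.app Y) q (trivFib_rlp M hqf hqw))
  have hθqw : QWeakEquivalence M Q θ :=
    qw_of_postcomp M Q θ _ (A3 q (trivFib_qfib M Q hqf hqw))
    (by rw [hθsnd]; show M.W (Q.map (η.app X ≫ j)); rw [Q.map_comp]
        exact M.w_comp _ _ (A2 X).2 (A1 j hjw))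
  obtain ⟨V, i, r, hic, hrf, hrw, hir⟩ := M.factor_cof_trivFib θ
  have hiqw : QWeakEquivalence M Q i := qw_of_postcomp M Q i r (A1 r hrw)
    (by rw [hir]; exact hθqw)
  obtain ⟨h, hh1, hh2⟩ := hp i hic hiqw (𝟙 X) (r ≫ pullback.fst (η.app Y) q)
    (by rw [Category.id_comp, ← Category.assoc, hir, hθfst])
  refine M.w_retract p (r ≫ pullback.fst (η.app Y) q)
    ⟨i, h, 𝟙 Y, 𝟙 Y, hh1, Category.id_comp _, ?_, ?_⟩
    (M.w_comp _ _ hrw hfst.2)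
  · rw [← Category.assoc, hir, hθfst, Category.comp_id]
  · rw [hh2]; exact Category.comp_id _

lemma qw_over_qfib (hproper : M.RightProper)
    (A1 : ∀ {X Y : C} (f : X ⟶ Y), M.W f → M.W (Q.map f))
    (A2 : ∀ A : C, M.W (η.app (Q.obj A)) ∧ M.W (Q.map (η.app A)))
    (A3 : ∀ {A B : C} (p : B ⟶ Q.obj A), QFibration M Q p →
      QWeakEquivalence M Q (pullback.snd (η.app A) p))
    {B E1 E2 : C} {π1 : E1 ⟶ B} {π2 : E2 ⟶ B} {g : E1 ⟶ E2}
    (hg : g ≫ π2 = π1) (h1 : QFibration M Q π1) (h2 : QFibration M Q π2)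
    (hgq : QWeakEquivalence M Q g) : M.W g := by
  obtain ⟨V, c, u, hcc, hcq, huf, hcu⟩ := bf_factor M Q η hproper A1 A2 A3 g
  have huq : QWeakEquivalence M Q u := qw_of_precomp M Q c u hcq (by rw [hcu]; exact hgq)
  have huwe : M.W u := qfib_qw_we M Q η A1 A2 A3 huf huq
  set πV : V ⟶ B := u ≫ π2 with hπV
  have hπVq : QFibration M Q πV := qfib_comp M Q huf h2
  have hcπV : c ≫ πV = π1 := by rw [hπV, ← Category.assoc, hcu, hg]
  obtain ⟨ρ, hρ1, hρ2⟩ := h1 c hcc hcq (𝟙 E1) πV (by rw [Category.id_comp, hcπV])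
  set δ : V ⟶ pullback πV πV := pullback.lift (𝟙 V) (𝟙 V) rfl with hδ
  have hδfst : δ ≫ pullback.fst πV πV = 𝟙 V := by rw [hδ]; exact pullback.lift_fst _ _ _
  have hδsnd : δ ≫ pullback.snd πV πV = 𝟙 V := by rw [hδ]; exact pullback.lift_snd _ _ _
  obtain ⟨PV, σ, pv, hσc, hσq, hpvq, hσpv⟩ := bf_factor M Q η hproper A1 A2 A3 δ
  set p0 : PV ⟶ V := pv ≫ pullback.fst πV πV with hp0
  set p1 : PV ⟶ V := pv ≫ pullback.snd πV πV with hp1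
  have hσp0 : σ ≫ p0 = 𝟙 V := by rw [hp0, ← Category.assoc, hσpv, hδfst]
  have hσp1 : σ ≫ p1 = 𝟙 V := by rw [hp1, ← Category.assoc, hσpv, hδsnd]
  have hp0q : QFibration M Q p0 := qfib_comp M Q hpvq (qfib_pb_fst M Q _ hπVq)
  have hp1q : QFibration M Q p1 := qfib_comp M Q hpvq (qfib_pb_snd M Q _ hπVq)
  have hp0qw : QWeakEquivalence M Q p0 := qw_of_precomp M Q σ p0 hσq
    (by rw [hσp0]; show M.W (Q.map (𝟙 V)); rw [Q.map_id]; exact M.w_id _)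
  have hp1qw : QWeakEquivalence M Q p1 := qw_of_precomp M Q σ p1 hσq
    (by rw [hσp1]; show M.W (Q.map (𝟙 V)); rw [Q.map_id]; exact M.w_id _)
  have hp0we : M.W p0 := qfib_qw_we M Q η A1 A2 A3 hp0q hp0qw
  have hp1we : M.W p1 := qfib_qw_we M Q η A1 A2 A3 hp1q hp1qw
  set g2 : V ⟶ pullback πV πV := pullback.lift (𝟙 V) (ρ ≫ c)
    (by rw [Category.id_comp, Category.assoc, hcπV, hρ2]) with hg2
  have hg2fst : g2 ≫ pullback.fst πV πV = 𝟙 V := by rw [hg2]; exact pullback.lift_fst _ _ _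
  have hg2snd : g2 ≫ pullback.snd πV πV = ρ ≫ c := by rw [hg2]; exact pullback.lift_snd _ _ _
  have hcδ : c ≫ δ = c ≫ g2 := by
    apply pullback.hom_ext
    · rw [Category.assoc, Category.assoc, hδfst, hg2fst]
    · rw [Category.assoc, Category.assoc, hδsnd, hg2snd, Category.comp_id,
        ← Category.assoc, hρ1, Category.id_comp]
  obtain ⟨H, hH1, hH2⟩ := hpvq c hcc hcq (c ≫ σ) g2 (by rw [Category.assoc, hσpv, hcδ])
  have hHp0 : H ≫ p0 = 𝟙 V := by rw [hp0, ← Category.assoc, hH2, hg2fst]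
  have hHwe : M.W H := M.w_of_postcomp H p0 hp0we (by rw [hHp0]; exact M.w_id V)
  have hρc : ρ ≫ c = H ≫ p1 := by rw [hp1, ← Category.assoc, hH2, hg2snd]
  have hρcwe : M.W (ρ ≫ c) := by rw [hρc]; exact M.w_comp _ _ hHwe hp1we
  have hcwe : M.W c := M.w_retract c (ρ ≫ c)
    ⟨c, ρ, 𝟙 V, 𝟙 V, hρ1, Category.id_comp _,
      by rw [← Category.assoc, hρ1, Category.id_comp, Category.comp_id],
      by rw [Category.comp_id]⟩ hρcwe
  rw [← hcu]; exact M.w_comp c u hcwe huwe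

lemma reedy {B E1 E2 X : C} {π1 : E1 ⟶ B} {π2 : E2 ⟶ B} {g : E1 ⟶ E2}
    (hg : g ≫ π2 = π1) (hgw : M.W g) (h1 : M.Fib π1) (h2 : M.Fib π2) (f : X ⟶ B)
    (φ : pullback f π1 ⟶ pullback f π2)
    (hφ1 : φ ≫ pullback.fst f π2 = pullback.fst f π1)
    (hφ2 : φ ≫ pullback.snd f π2 = pullback.snd f π1 ≫ g) : M.W φ := by
  obtain ⟨V, c, u, hcc, hcw, huf, hcu⟩ := M.factor_trivCof_fib g
  have huw : M.W u := M.w_of_precomp c u hcw (by rw [hcu]; exact hgw)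
  set πV : V ⟶ B := u ≫ π2 with hπV
  have hπVf : M.Fib πV := M.fib_comp u π2 huf h2
  have hcπV : c ≫ πV = π1 := by rw [hπV, ← Category.assoc, hcu, hg]
  obtain ⟨ρ, hρ1, hρ2⟩ := M.lift hcc h1 (Or.inl hcw) (f := 𝟙 E1) (g := πV)
    (by rw [Category.id_comp, hcπV])
  set δ : V ⟶ pullback πV πV := pullback.lift (𝟙 V) (𝟙 V) rfl with hδ
  have hδfst : δ ≫ pullback.fst πV πV = 𝟙 V := by rw [hδ]; exact pullback.lift_fst _ _ _
  have hδsnd : δ ≫ pullback.snd πV πV = 𝟙 V := by rw [hδ]; exact pullback.lift_snd _ _ _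
  obtain ⟨PV, σ, pv, hσc, hσw, hpvf, hσpv⟩ := M.factor_trivCof_fib δ
  set p0 : PV ⟶ V := pv ≫ pullback.fst πV πV with hp0
  set p1 : PV ⟶ V := pv ≫ pullback.snd πV πV with hp1
  have hσp0 : σ ≫ p0 = 𝟙 V := by rw [hp0, ← Category.assoc, hσpv, hδfst]
  have hσp1 : σ ≫ p1 = 𝟙 V := by rw [hp1, ← Category.assoc, hσpv, hδsnd]
  have hp0f : M.Fib p0 := M.fib_comp _ _ hpvf (fib_pb_fst M _ hπVf)
  have hp1f : M.Fib p1 := M.fib_comp _ _ hpvf (fib_pb_snd M _ hπVf)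
  have hp0w : M.W p0 := M.w_of_precomp σ p0 hσw (by rw [hσp0]; exact M.w_id V)
  have hp1w : M.W p1 := M.w_of_precomp σ p1 hσw (by rw [hσp1]; exact M.w_id V)
  set g2 : V ⟶ pullback πV πV := pullback.lift (𝟙 V) (ρ ≫ c)
    (by rw [Category.id_comp, Category.assoc, hcπV, hρ2]) with hg2
  have hg2fst : g2 ≫ pullback.fst πV πV = 𝟙 V := by rw [hg2]; exact pullback.lift_fst _ _ _
  have hg2snd : g2 ≫ pullback.snd πV πV = ρ ≫ c := by rw [hg2]; exact pullback.lift_snd _ _ _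
  have hcδ : c ≫ δ = c ≫ g2 := by
    apply pullback.hom_ext
    · rw [Category.assoc, Category.assoc, hδfst, hg2fst]
    · rw [Category.assoc, Category.assoc, hδsnd, hg2snd, Category.comp_id,
        ← Category.assoc, hρ1, Category.id_comp]
  obtain ⟨H, hH1, hH2⟩ := M.lift hcc hpvf (Or.inl hcw) (f := c ≫ σ) (g := g2)
    (by rw [Category.assoc, hσpv, hcδ])
  have hHp0 : H ≫ p0 = 𝟙 V := by rw [hp0, ← Category.assoc, hH2, hg2fst]
  have hHp1 : H ≫ p1 = ρ ≫ c := by rw [hp1, ← Category.assoc, hH2, hg2snd]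
  set πPV : PV ⟶ B := p0 ≫ πV with hπPV
  have hp0B : p0 ≫ πV = πPV := hπPV.symm
  have hp1B : p1 ≫ πV = πPV := by
    rw [hπPV, hp0, hp1, Category.assoc, Category.assoc, pullback.condition]
  have hHB : H ≫ πPV = πV := by rw [hπPV, ← Category.assoc, hHp0, Category.id_comp]
  -- base change along f
  have hcs_rlp : HasRLP M.Cof (starMap f p0 hp0B) :=
    starMap_rlp M f p0 hp0B (trivFib_rlp M hp0f hp0w)
  have hp0s_we : M.W (starMap f p0 hp0B) := (trivFib_of_rlp M hcs_rlp).2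
  have hp1s_we : M.W (starMap f p1 hp1B) :=
    (trivFib_of_rlp M (starMap_rlp M f p1 hp1B (trivFib_rlp M hp1f hp1w))).2
  have hus_we : M.W (starMap f u hπV.symm) :=
    (trivFib_of_rlp M (starMap_rlp M f u hπV.symm (trivFib_rlp M huf huw))).2
  have hHsp0s : starMap f H hHB ≫ starMap f p0 hp0B = 𝟙 (pullback f πV) := by
    apply pullback.hom_ext <;> simp [hHp0]
  have hHs_we : M.W (starMap f H hHB) := M.w_of_postcomp _ _ hp0s_we
    (by rw [hHsp0s]; exact M.w_id _)
  have hcsρs : starMap f c hcπV ≫ starMap f ρ hρ2 = 𝟙 (pullback f π1) := by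
    apply pullback.hom_ext <;> simp [hρ1]
  have hρscs : starMap f ρ hρ2 ≫ starMap f c hcπV = starMap f H hHB ≫ starMap f p1 hp1B := by
    apply pullback.hom_ext <;> simp [hHp1]
  have hρscs_we : M.W (starMap f ρ hρ2 ≫ starMap f c hcπV) := by
    rw [hρscs]; exact M.w_comp _ _ hHs_we hp1s_we
  have hcs_we : M.W (starMap f c hcπV) := M.w_retract _ _
    ⟨starMap f c hcπV, starMap f ρ hρ2, 𝟙 _, 𝟙 _, hcsρs, Category.id_comp _,
      by rw [← Category.assoc, hcsρs, Category.id_comp, Category.comp_id],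
      by rw [Category.comp_id]⟩ hρscs_we
  have hφeq : φ = starMap f c hcπV ≫ starMap f u hπV.symm := by
    apply pullback.hom_ext
    · simp [hφ1]
    · simp [hφ2, hcu]
  rw [hφeq]; exact M.w_comp _ _ hcs_we hus_we

lemma bf_right_proper (hproper : M.RightProper)
    (A1 : ∀ {X Y : C} (f : X ⟶ Y), M.W f → M.W (Q.map f))
    (A2 : ∀ A : C, M.W (η.app (Q.obj A)) ∧ M.W (Q.map (η.app A)))
    (A3 : ∀ {A B : C} (p : B ⟶ Q.obj A), QFibration M Q p →
      QWeakEquivalence M Q (pullback.snd (η.app A) p))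
    {X B E : C} (f : X ⟶ B) (p : E ⟶ B)
    (hf : QWeakEquivalence M Q f) (hp : QFibration M Q p) :
    QWeakEquivalence M Q (pullback.snd f p) := by
  obtain ⟨Z', j, q, hjc, hjw, hqf, hjq⟩ := M.factor_trivCof_fib (Q.map p)
  have hηZ : M.W (η.app Z') := eta_we_of_factor M Q η A1 A2 hjw
  have hqQ : QFibration M Q q := lemmaD M Q η hproper hqf hηZ (A2 B).1
  have hcone : p ≫ η.app B = (η.app E ≫ j) ≫ q := by
    rw [Category.assoc, hjq, nat_eta Q η p]
  set θ : E ⟶ pullback (η.app B) q := pullback.lift p (η.app E ≫ j) hcone with hθdef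
  have hθfst : θ ≫ pullback.fst (η.app B) q = p := by
    rw [hθdef]; exact pullback.lift_fst _ _ _
  have hθsnd : θ ≫ pullback.snd (η.app B) q = η.app E ≫ j := by
    rw [hθdef]; exact pullback.lift_snd _ _ _
  have hηjqw : QWeakEquivalence M Q (η.app E ≫ j) := by
    show M.W (Q.map _); rw [Q.map_comp]; exact M.w_comp _ _ (A2 E).2 (A1 j hjw)
  have hfstq : QFibration M Q (pullback.fst (η.app B) q) := qfib_pb_fst M Q _ hqQ
  have hθqw : QWeakEquivalence M Q θ := qw_of_postcomp M Q θ _ (A3 q hqQ)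
    (by rw [hθsnd]; exact hηjqw)
  have hθwe : M.W θ := qw_over_qfib M Q η hproper A1 A2 A3 hθfst hp hfstq hθqw
  -- the comparison map α between pullbacks over f
  have hαcone : pullback.fst f p ≫ f =
      (pullback.snd f p ≫ θ) ≫ pullback.fst (η.app B) q := by
    rw [Category.assoc, hθfst, pullback.condition]
  set α : pullback f p ⟶ pullback f (pullback.fst (η.app B) q) :=
    pullback.lift (pullback.fst f p) (pullback.snd f p ≫ θ) hαcone with hα
  have hαfst : α ≫ pullback.fst f (pullback.fst (η.app B) q) = pullback.fst f p := by
    rw [hα]; exact pullback.lift_fst _ _ _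
  have hαsnd : α ≫ pullback.snd f (pullback.fst (η.app B) q) = pullback.snd f p ≫ θ := by
    rw [hα]; exact pullback.lift_snd _ _ _
  have hαwe : M.W α := reedy M hθfst hθwe (qfib_fib M Q A1 hp)
    (qfib_fib M Q A1 hfstq) f α hαfst hαsnd
  -- auxiliary pullbacks R and T
  have hsndR_we : M.W (pullback.snd (Q.map f) q) := hproper _ _ hf hqf
  have hRq : QFibration M Q (pullback.fst (Q.map f) q) := qfib_pb_fst M Q _ hqQ
  have hTsnd_qw : QWeakEquivalence M Q
      (pullback.snd (η.app X) (pullback.fst (Q.map f) q)) := A3 _ hRq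
  -- the isomorphism u2 between U and T
  set uZ : pullback f (pullback.fst (η.app B) q) ⟶ Z' :=
    pullback.snd f (pullback.fst (η.app B) q) ≫ pullback.snd (η.app B) q with huZ
  have huRcone : (pullback.fst f (pullback.fst (η.app B) q) ≫ η.app X) ≫ Q.map f
      = uZ ≫ q := by
    rw [huZ, Category.assoc, Category.assoc, ← nat_eta Q η f,
      ← pullback.condition (f := η.app B) (g := q), ← Category.assoc, ← Category.assoc,
      pullback.condition (f := f) (g := pullback.fst (η.app B) q)]
  set uR : pullback f (pullback.fst (η.app B) q) ⟶ pullback (Q.map f) q :=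
    pullback.lift (pullback.fst f (pullback.fst (η.app B) q) ≫ η.app X) uZ huRcone with huR
  have huRfst : uR ≫ pullback.fst (Q.map f) q
      = pullback.fst f (pullback.fst (η.app B) q) ≫ η.app X := by
    rw [huR]; exact pullback.lift_fst _ _ _
  have huRsnd : uR ≫ pullback.snd (Q.map f) q = uZ := by
    rw [huR]; exact pullback.lift_snd _ _ _
  set u2 : pullback f (pullback.fst (η.app B) q) ⟶
      pullback (η.app X) (pullback.fst (Q.map f) q) :=
    pullback.lift (pullback.fst f (pullback.fst (η.app B) q)) uR huRfst.symm with hu2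
  have hu2fst : u2 ≫ pullback.fst (η.app X) (pullback.fst (Q.map f) q)
      = pullback.fst f (pullback.fst (η.app B) q) := by
    rw [hu2]; exact pullback.lift_fst _ _ _
  have hu2snd : u2 ≫ pullback.snd (η.app X) (pullback.fst (Q.map f) q) = uR := by
    rw [hu2]; exact pullback.lift_snd _ _ _
  -- the inverse u1
  set tZ : pullback (η.app X) (pullback.fst (Q.map f) q) ⟶ Z' :=
    pullback.snd (η.app X) (pullback.fst (Q.map f) q) ≫ pullback.snd (Q.map f) q with htZ
  have htPcone : (pullback.fst (η.app X) (pullback.fst (Q.map f) q) ≫ f) ≫ η.app B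
      = tZ ≫ q := by
    rw [htZ, Category.assoc, Category.assoc, nat_eta Q η f,
      ← pullback.condition (f := Q.map f) (g := q), ← Category.assoc, ← Category.assoc,
      pullback.condition (f := η.app X) (g := pullback.fst (Q.map f) q)]
  set tP : pullback (η.app X) (pullback.fst (Q.map f) q) ⟶ pullback (η.app B) q :=
    pullback.lift (pullback.fst (η.app X) (pullback.fst (Q.map f) q) ≫ f) tZ htPcone
    with htP
  have htPfst : tP ≫ pullback.fst (η.app B) q
      = pullback.fst (η.app X) (pullback.fst (Q.map f) q) ≫ f := by
    rw [htP]; exact pullback.lift_fst _ _ _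
  have htPsnd : tP ≫ pullback.snd (η.app B) q = tZ := by
    rw [htP]; exact pullback.lift_snd _ _ _
  set u1 : pullback (η.app X) (pullback.fst (Q.map f) q) ⟶
      pullback f (pullback.fst (η.app B) q) :=
    pullback.lift (pullback.fst (η.app X) (pullback.fst (Q.map f) q)) tP htPfst.symm
    with hu1
  have hu1fst : u1 ≫ pullback.fst f (pullback.fst (η.app B) q)
      = pullback.fst (η.app X) (pullback.fst (Q.map f) q) := by
    rw [hu1]; exact pullback.lift_fst _ _ _
  have hu1snd : u1 ≫ pullback.snd f (pullback.fst (η.app B) q) = tP := by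
    rw [hu1]; exact pullback.lift_snd _ _ _
  have hu21 : u2 ≫ u1 = 𝟙 _ := by
    apply pullback.hom_ext
    · rw [Category.assoc, hu1fst, hu2fst, Category.id_comp]
    · rw [Category.assoc, hu1snd, Category.id_comp]
      apply pullback.hom_ext
      · rw [Category.assoc, htPfst, ← Category.assoc, hu2fst,
          pullback.condition (f := f)]
      · rw [Category.assoc, htPsnd, htZ, ← Category.assoc, hu2snd, huRsnd, huZ]
  have hu12 : u1 ≫ u2 = 𝟙 _ := by
    apply pullback.hom_ext
    · rw [Category.assoc, hu2fst, hu1fst, Category.id_comp]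
    · rw [Category.assoc, hu2snd, Category.id_comp]
      apply pullback.hom_ext
      · rw [Category.assoc, huRfst, ← Category.assoc, hu1fst,
          pullback.condition (f := η.app X)]
      · rw [Category.assoc, huRsnd, huZ, ← Category.assoc, hu1snd, htPsnd, htZ]
  have hu2iso : IsIso u2 := ⟨u1, hu21, hu12⟩
  have hu2qw : QWeakEquivalence M Q u2 := by
    show M.W (Q.map u2)
    have : IsIso (Q.map u2) := inferInstance
    exact w_of_iso M _
  have huZqw : QWeakEquivalence M Q uZ := by
    have h5 : uZ = u2 ≫ pullback.snd (η.app X) (pullback.fst (Q.map f) q)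
        ≫ pullback.snd (Q.map f) q := by
      rw [← Category.assoc, hu2snd, huRsnd]
    rw [h5]
    exact qw_comp M Q hu2qw (qw_comp M Q hTsnd_qw (A1 _ hsndR_we))
  have hkey : QWeakEquivalence M Q (pullback.snd f p ≫ (η.app E ≫ j)) := by
    have h6 : α ≫ uZ = pullback.snd f p ≫ (η.app E ≫ j) := by
      rw [huZ, ← Category.assoc, hαsnd, Category.assoc, hθsnd]
    rw [← h6]
    exact qw_comp M Q (show QWeakEquivalence M Q α from A1 α hαwe) huZqw
  exact qw_of_postcomp M Q (pullback.snd f p) (η.app E ≫ j) hηjqw hkey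

lemma qw_retract {X Y X' Y' : C} (f : X ⟶ Y) (f' : X' ⟶ Y')
    (h : IsRetractOfMap f f') (hf' : QWeakEquivalence M Q f') :
    QWeakEquivalence M Q f := by
  obtain ⟨iX, rX, iY, rY, h1, h2, h3, h4⟩ := h
  exact M.w_retract (Q.map f) (Q.map f') ⟨Q.map iX, Q.map rX, Q.map iY, Q.map rY,
    by rw [← Q.map_comp, h1, Q.map_id], by rw [← Q.map_comp, h2, Q.map_id],
    by rw [← Q.map_comp, h3, Q.map_comp], by rw [← Q.map_comp, h4, Q.map_comp]⟩ hf'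

end Main

end Aux

end BF

/-!
STATEMENT 13 (Bousfield–Friedlander localization): Let `M` be a right proper model
structure on `C`, `Q : C ⥤ C` a functor and `η : 𝟭 C ⟶ Q` a natural transformation
satisfying (A1) `Q` preserves weak equivalences; (A2) `η_{Q A}` and `Q(η_A)` are weak
equivalences; (A3) for every `Q`-fibration `p : B ⟶ Q A`, the induced map
`A ×_{Q A} B ⟶ B` is a `Q`-weak equivalence.  Then `C` carries a right proper model
structure with weak equivalences the `Q`-weak equivalences, the cofibrations of `M`,
and the `Q`-fibrations as fibrations.
-/

theorem bousfield_friedlander_localization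
    [HasPullbacks C]
    (M : ModelStructure C) (Q : C ⥤ C) (η : 𝟭 C ⟶ Q)
    (hproper : M.RightProper)
    (A1 : ∀ {X Y : C} (f : X ⟶ Y), M.W f → M.W (Q.map f))
    (A2 : ∀ A : C, M.W (η.app (Q.obj A)) ∧ M.W (Q.map (η.app A)))
    (A3 : ∀ {A B : C} (p : B ⟶ Q.obj A), QFibration M Q p →
      QWeakEquivalence M Q (pullback.snd (η.app A) p)) :
    ∃ M' : ModelStructure C,
      M'.W = QWeakEquivalence M Q ∧
      M'.Cof = M.Cof ∧
      M'.Fib = QFibration M Q ∧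
      M'.RightProper := by
  refine ⟨{
    W := QWeakEquivalence M Q
    Fib := QFibration M Q
    Cof := M.Cof
    w_id := fun X => by show M.W (Q.map (𝟙 X)); rw [Q.map_id]; exact M.w_id _
    fib_id := BF.qfib_id M Q
    cof_id := M.cof_id
    w_comp := fun f g hf hg => BF.qw_comp M Q hf hg
    fib_comp := fun f g hf hg => BF.qfib_comp M Q hf hg
    cof_comp := M.cof_comp
    w_of_postcomp := fun f g => BF.qw_of_postcomp M Q f g
    w_of_precomp := fun f g => BF.qw_of_precomp M Q f g
    w_retract := fun f f' h hf' => BF.qw_retract M Q f f' h hf'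
    fib_retract := fun p p' h hp => BF.qfib_retract M Q h hp
    cof_retract := M.cof_retract
    lift := fun {A B X Y i p} hic hpf hor {f g} sq => by
      rcases hor with hi | hpw
      · exact hpf i hic hi f g sq
      · exact M.lift hic (BF.qfib_fib M Q A1 hpf)
          (Or.inr (BF.qfib_qw_we M Q η A1 A2 A3 hpf hpw)) sq
    factor_cof_trivFib := fun f => by
      obtain ⟨Z, i, pp, hic, hpf, hpw, he⟩ := M.factor_cof_trivFib f
      exact ⟨Z, i, pp, hic, BF.trivFib_qfib M Q hpf hpw, A1 _ hpw, he⟩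
    factor_trivCof_fib := fun f => BF.bf_factor M Q η hproper A1 A2 A3 f
  }, rfl, rfl, rfl, ?_⟩
  intro X' Y' Z' f p hf hp
  exact BF.bf_right_proper M Q η hproper A1 A2 A3 f p hf hp
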